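/- For every n ≥ 1, the number of compositions of n with all parts odd equals the number of compositions of n+1 with all parts greater than 1. -/
import Mathlib

/-- Lists of naturals with sum `n` and all entries odd. -/
private abbrev OddL (n : ℕ) := {l : List ℕ // l.sum = n ∧ ∀ x ∈ l, Odd x}

/-- Lists of naturals with sum `n` and all entries `> 1`. -/
private abbrev GtL (n : ℕ) := {l : List ℕ // l.sum = n ∧ ∀ x ∈ l, 1 < x}

private lemma nil_of_sum_zero {l : List ℕ} (hpos : ∀ x ∈ l, 0 < x) (h : l.sum = 0) :
    l = [] := by
  cases l with
  | nil => rfl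
  | cons a t =>
    exfalso
    have := hpos a (by simp)
    simp [List.sum_cons] at h
    omega

private instance (n : ℕ) : Finite (OddL n) := by
  apply Finite.of_injective (fun l : OddL n =>
    (⟨l.1, fun hi => (l.2.2 _ hi).pos, l.2.1⟩ : Composition n))
  intro a b h
  exact Subtype.ext (congrArg Composition.blocks h)

private instance (n : ℕ) : Finite (GtL n) := by
  apply Finite.of_injective (fun l : GtL n =>
    (⟨l.1, fun hi => by have := l.2.2 _ hi; omega, l.2.1⟩ : Composition n))
  intro a b h
  exact Subtype.ext (congrArg Composition.blocks h)

/-- Recurrence equivalence for odd compositions. -/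
private def olEquiv (n : ℕ) (hn : n ≠ 0) : OddL (n + 2) ≃ OddL (n + 1) ⊕ OddL n where
  toFun l :=
    if h : l.1.headI = 1 then
      Sum.inl ⟨l.1.tail, by
        obtain ⟨l, hs, ho⟩ := l
        cases l with
        | nil => simp at hs
        | cons a t =>
          simp at h hs ⊢
          constructor
          · omega
          · intro x hx; exact ho x (by simp [hx])⟩
    else
      Sum.inr ⟨(l.1.headI - 2) :: l.1.tail, by
        obtain ⟨l, hs, ho⟩ := l
        cases l with
        | nil => simp at hs
        | cons a t =>
          simp at h hs ⊢
          obtain ⟨k, hk⟩ := ho a (by simp)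
          refine ⟨by omega, ⟨k - 1, by omega⟩, ?_⟩
          intro x hx; exact ho x (by simp [hx])⟩
  invFun s :=
    match s with
    | Sum.inl t => ⟨1 :: t.1, by
        obtain ⟨t, hs, ho⟩ := t
        refine ⟨by simp [hs]; omega, ?_⟩
        intro x hx
        rcases List.mem_cons.1 hx with rfl | hx
        · exact ⟨0, by norm_num⟩
        · exact ho x hx⟩
    | Sum.inr l => ⟨(l.1.headI + 2) :: l.1.tail, by
        obtain ⟨l, hs, ho⟩ := l
        cases l with
        | nil => exfalso; simp at hs; omega
        | cons a t =>
          simp at hs ⊢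
          obtain ⟨k, hk⟩ := ho a (by simp)
          exact ⟨by omega, ⟨k + 1, by omega⟩, fun x hx => ho x (by simp [hx])⟩⟩
  left_inv := by
    rintro ⟨l, hs, ho⟩
    cases l with
    | nil => simp at hs
    | cons a t =>
      by_cases h : a = 1
      · subst h; simp
      · obtain ⟨k, hk⟩ := ho a (by simp)
        apply Subtype.ext
        simp [h]
        omega
  right_inv := by
    rintro (⟨t, hs, ho⟩ | ⟨l, hs, ho⟩)
    · simp
    · cases l with
      | nil => exfalso; simp at hs; omega
      | cons a t =>
        obtain ⟨k, hk⟩ := ho a (by simp)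
        simp [show ¬ (a + 2 = 1) by omega]

/-- Recurrence equivalence for compositions with parts `> 1`. -/
private def glEquiv (n : ℕ) : GtL (n + 2) ≃ GtL (n + 1) ⊕ GtL n where
  toFun l :=
    if h : l.1.headI = 2 then
      Sum.inr ⟨l.1.tail, by
        obtain ⟨l, hs, ho⟩ := l
        cases l with
        | nil => simp at hs
        | cons a t =>
          simp at h hs ⊢
          exact ⟨by omega, fun x hx => ho x (by simp [hx])⟩⟩
    else
      Sum.inl ⟨(l.1.headI - 1) :: l.1.tail, by
        obtain ⟨l, hs, ho⟩ := l
        cases l with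
        | nil => simp at hs
        | cons a t =>
          simp at h hs ⊢
          have ha := ho a (by simp)
          exact ⟨by omega, by omega, fun x hx => ho x (by simp [hx])⟩⟩
  invFun s :=
    match s with
    | Sum.inr t => ⟨2 :: t.1, by
        obtain ⟨t, hs, ho⟩ := t
        refine ⟨by simp [hs]; omega, ?_⟩
        intro x hx
        rcases List.mem_cons.1 hx with rfl | hx
        · norm_num
        · exact ho x hx⟩
    | Sum.inl l => ⟨(l.1.headI + 1) :: l.1.tail, by
        obtain ⟨l, hs, ho⟩ := l
        cases l with
        | nil => simp at hs
        | cons a t =>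
          simp at hs ⊢
          have := ho a (by simp)
          exact ⟨by omega, by omega, fun x hx => ho x (by simp [hx])⟩⟩
  left_inv := by
    rintro ⟨l, hs, ho⟩
    cases l with
    | nil => simp at hs
    | cons a t =>
      by_cases h : a = 2
      · subst h; simp
      · have := ho a (by simp)
        apply Subtype.ext
        simp [h]
        omega
  right_inv := by
    rintro (⟨l, hs, ho⟩ | ⟨t, hs, ho⟩)
    · cases l with
      | nil => simp at hs
      | cons a t =>
        have := ho a (by simp)
        simp [show ¬ (a + 1 = 2) by omega]
    · simp

private lemma ol_rec (n : ℕ) (hn : n ≠ 0) :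
    Nat.card (OddL (n + 2)) = Nat.card (OddL (n + 1)) + Nat.card (OddL n) := by
  rw [Nat.card_congr (olEquiv n hn), Nat.card_sum]

private lemma gl_rec (n : ℕ) :
    Nat.card (GtL (n + 2)) = Nat.card (GtL (n + 1)) + Nat.card (GtL n) := by
  rw [Nat.card_congr (glEquiv n), Nat.card_sum]

private lemma ol_one : Nat.card (OddL 1) = 1 := by
  rw [Nat.card_eq_one_iff_unique]
  constructor
  · constructor
    rintro ⟨l, hs, ho⟩ ⟨l', hs', ho'⟩
    have key : ∀ m : List ℕ, m.sum = 1 → (∀ x ∈ m, Odd x) → m = [1] := by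
      rintro (_ | ⟨a, t⟩) hs ho
      · simp at hs
      · simp at hs ⊢
        have := (ho a (by simp)).pos
        have ha : a = 1 := by omega
        have ht : t = [] := nil_of_sum_zero (fun x hx => (ho x (by simp [hx])).pos) (by omega)
        exact ⟨ha, ht⟩
    simp [key l hs ho, key l' hs' ho']
  · exact ⟨⟨[1], by simp, by simp⟩⟩

private lemma ol_two : Nat.card (OddL 2) = 1 := by
  rw [Nat.card_eq_one_iff_unique]
  constructor
  · constructor
    rintro ⟨l, hs, ho⟩ ⟨l', hs', ho'⟩
    have key : ∀ m : List ℕ, m.sum = 2 → (∀ x ∈ m, Odd x) → m = [1, 1] := by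
      rintro (_ | ⟨a, t⟩) hs ho
      · simp at hs
      · simp at hs
        obtain ⟨k, hk⟩ := ho a (by simp)
        have ha : a = 1 := by omega
        cases t with
        | nil => exfalso; simp at hs; omega
        | cons b t' =>
          simp at hs
          obtain ⟨k', hk'⟩ := ho b (by simp)
          have hb : b = 1 := by omega
          have ht : t' = [] :=
            nil_of_sum_zero (fun x hx => (ho x (by simp [hx])).pos) (by omega)
          simp [ha, hb, ht]
    simp [key l hs ho, key l' hs' ho']
  · exact ⟨⟨[1, 1], by simp, by simp⟩⟩

private lemma gl_two : Nat.card (GtL 2) = 1 := by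
  rw [Nat.card_eq_one_iff_unique]
  constructor
  · constructor
    rintro ⟨l, hs, ho⟩ ⟨l', hs', ho'⟩
    have key : ∀ m : List ℕ, m.sum = 2 → (∀ x ∈ m, 1 < x) → m = [2] := by
      rintro (_ | ⟨a, t⟩) hs ho
      · simp at hs
      · simp at hs ⊢
        have := ho a (by simp)
        have ha : a = 2 := by omega
        have ht : t = [] := nil_of_sum_zero (fun x hx => by have := ho x (by simp [hx]); omega)
          (by omega)
        exact ⟨ha, ht⟩
    simp [key l hs ho, key l' hs' ho']
  · exact ⟨⟨[2], by simp, by simp⟩⟩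

private lemma gl_three : Nat.card (GtL 3) = 1 := by
  rw [Nat.card_eq_one_iff_unique]
  constructor
  · constructor
    rintro ⟨l, hs, ho⟩ ⟨l', hs', ho'⟩
    have key : ∀ m : List ℕ, m.sum = 3 → (∀ x ∈ m, 1 < x) → m = [3] := by
      rintro (_ | ⟨a, t⟩) hs ho
      · simp at hs
      · cases t with
        | nil =>
          simp at hs ⊢
          exact hs
        | cons b t' =>
          exfalso
          have h1 := ho a (by simp)
          have h2 := ho b (by simp)
          simp at hs
          omega
    simp [key l hs ho, key l' hs' ho']
  · exact ⟨⟨[3], by simp, by simp⟩⟩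

private lemma key_eq : ∀ n : ℕ, 1 ≤ n → Nat.card (OddL n) = Nat.card (GtL (n + 1)) := by
  intro n
  induction n using Nat.strong_induction_on with
  | _ n ih =>
    match n with
    | 0 => intro h; exact absurd h (by omega)
    | 1 => intro _; rw [ol_one, gl_two]
    | 2 => intro _; rw [ol_two, gl_three]
    | (m + 3) =>
      intro _
      rw [show m + 3 = (m + 1) + 2 by ring, ol_rec (m + 1) (by omega),
        show m + 1 + 2 + 1 = (m + 2) + 2 by ring, gl_rec (m + 2),
        ih (m + 2) (by omega) (by omega), ih (m + 1) (by omega) (by omega)]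

/-- The number of compositions of `n` with all parts odd equals the number of compositions
of `n+1` with all parts greater than one. -/
theorem compositions_odd_eq_compositions_gt_one (n : ℕ) (hn : 1 ≤ n) :
    Nat.card {c : Composition n // ∀ x ∈ c.blocks, Odd x} =
      Nat.card {c : Composition (n + 1) // ∀ x ∈ c.blocks, 1 < x} := by
  have e1 : {c : Composition n // ∀ x ∈ c.blocks, Odd x} ≃ OddL n :=
    { toFun := fun c => ⟨c.1.blocks, c.1.blocks_sum, c.2⟩
      invFun := fun l => ⟨⟨l.1, fun hi => (l.2.2 _ hi).pos, l.2.1⟩, l.2.2⟩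
      left_inv := fun c => rfl
      right_inv := fun l => rfl }
  have e2 : {c : Composition (n + 1) // ∀ x ∈ c.blocks, 1 < x} ≃ GtL (n + 1) :=
    { toFun := fun c => ⟨c.1.blocks, c.1.blocks_sum, c.2⟩
      invFun := fun l => ⟨⟨l.1, fun hi => by have := l.2.2 _ hi; omega, l.2.1⟩, l.2.2⟩
      left_inv := fun c => rfl
      right_inv := fun l => rfl }
  rw [Nat.card_congr e1, Nat.card_congr e2]
  exact key_eq n hn
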